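/- (No-community-structure scenario.) Suppose each connectivity matrix is constant, R^{(m)} = p^{(m)} · 𝟙𝟙ᵀ for scalars p^{(1)},…,p^{(N)} ∈ ℝ, set ξ₁ := (1/N)∑_{m=1}^N (p^{(m)})², and suppose the standardization Π_{jk} + Ψ_{jk} = 1 holds for all j,k. Then F = 2(1−ξ₁) C + c · 𝟙𝟙ᵀ with c := 2 ξ₁ ∑_{(s,t)∈P} C_{z_s z_t}, and consequently the smallest absolute eigenvalue of F satisfies min_{1≤i≤K} |λ_i(F)| ≥ 2(1−ξ₁) · min_{1≤i≤K} |λ_i(C)| − |c| K. -/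

import Mathlib

open Matrix BigOperators

noncomputable def toE {K : ℕ} (x : Fin K → ℝ) : EuclideanSpace ℝ (Fin K) := WithLp.toLp 2 x

lemma norm_sq_toE {K : ℕ} (x : Fin K → ℝ) : ‖toE x‖ ^ 2 = ∑ i, (x i) ^ 2 := by
  rw [EuclideanSpace.norm_eq, Real.sq_sqrt (by positivity)]
  simp [toE, sq_abs]

lemma norm_sq_repr {K : ℕ} (b : OrthonormalBasis (Fin K) ℝ (EuclideanSpace ℝ (Fin K)))
    (x : EuclideanSpace ℝ (Fin K)) : ‖x‖ ^ 2 = ∑ i, (b.repr x i) ^ 2 := by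
  rw [← b.repr.norm_map x, EuclideanSpace.norm_eq, Real.sq_sqrt (by positivity)]
  simp [sq_abs]

lemma repr_mulVec {K : ℕ} {A : Matrix (Fin K) (Fin K) ℝ} (hA : A.IsHermitian)
    (v : EuclideanSpace ℝ (Fin K)) (i : Fin K) :
    (hA.eigenvectorBasis.repr (toE (A *ᵥ ⇑v)) i)
      = hA.eigenvalues i * hA.eigenvectorBasis.repr v i := by
  set b := hA.eigenvectorBasis
  have hAT : Aᵀ = A := by
    have h := hA.eq
    ext j k
    have := congrFun (congrFun h j) k
    simpa [conjTranspose_apply] using this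
  rw [OrthonormalBasis.repr_apply_apply, OrthonormalBasis.repr_apply_apply]
  have h1 : (inner ℝ (b i) (toE (A *ᵥ ⇑v)) : ℝ) = ⇑(b i) ⬝ᵥ (A *ᵥ ⇑v) := by
    simp [PiLp.inner_apply, RCLike.inner_apply, dotProduct, toE, mul_comm]
  have h2 : (inner ℝ (b i) v : ℝ) = ⇑(b i) ⬝ᵥ ⇑v := by
    simp [PiLp.inner_apply, RCLike.inner_apply, dotProduct, mul_comm]
  rw [h1, h2, dotProduct_mulVec, ← mulVec_transpose, hAT, hA.mulVec_eigenvectorBasis i,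
    smul_dotProduct, smul_eq_mul]

lemma min_abs_eig_le_norm_mulVec {K : ℕ} (hK : 0 < K)
    {A : Matrix (Fin K) (Fin K) ℝ} (hA : A.IsHermitian)
    (v : EuclideanSpace ℝ (Fin K)) (hv : ‖v‖ = 1) :
    Finset.univ.inf' ⟨⟨0, hK⟩, Finset.mem_univ _⟩ (fun i => |hA.eigenvalues i|)
      ≤ ‖toE (A *ᵥ ⇑v)‖ := by
  set m := Finset.univ.inf' ⟨⟨0, hK⟩, Finset.mem_univ _⟩ (fun i => |hA.eigenvalues i|) with hm
  have hm0 : 0 ≤ m := Finset.le_inf' _ _ (fun i _ => abs_nonneg _)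
  have hsq : m ^ 2 ≤ ‖toE (A *ᵥ ⇑v)‖ ^ 2 := by
    rw [norm_sq_repr hA.eigenvectorBasis]
    have hvsum : ∑ i, (hA.eigenvectorBasis.repr v i) ^ 2 = 1 := by
      have := norm_sq_repr hA.eigenvectorBasis v
      rw [hv] at this; simpa using this.symm
    calc m ^ 2 = m ^ 2 * ∑ i, (hA.eigenvectorBasis.repr v i) ^ 2 := by rw [hvsum]; ring
      _ = ∑ i, m ^ 2 * (hA.eigenvectorBasis.repr v i) ^ 2 := by rw [Finset.mul_sum]
      _ ≤ ∑ i, (hA.eigenvalues i) ^ 2 * (hA.eigenvectorBasis.repr v i) ^ 2 := by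
          apply Finset.sum_le_sum
          intro i _
          apply mul_le_mul_of_nonneg_right _ (sq_nonneg _)
          have h1 : m ≤ |hA.eigenvalues i| := Finset.inf'_le _ (Finset.mem_univ i)
          have h2' : m ^ 2 ≤ |hA.eigenvalues i| ^ 2 := by nlinarith
          calc m ^ 2 ≤ |hA.eigenvalues i| ^ 2 := h2'
            _ = (hA.eigenvalues i) ^ 2 := sq_abs _
      _ = ∑ i, (hA.eigenvectorBasis.repr (toE (A *ᵥ ⇑v)) i) ^ 2 := by
          apply Finset.sum_congr rfl
          intro i _
          rw [repr_mulVec hA v i]; ring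
  exact le_of_pow_le_pow_left₀ two_ne_zero (norm_nonneg _) hsq

lemma norm_ones_mulVec_le {K : ℕ} (v : EuclideanSpace ℝ (Fin K)) (hv : ‖v‖ = 1) :
    ‖toE ((Matrix.of fun _ _ : Fin K => (1:ℝ)) *ᵥ ⇑v)‖ ≤ (K : ℝ) := by
  have hK0 : (0:ℝ) ≤ K := Nat.cast_nonneg K
  have hsq : ‖toE ((Matrix.of fun _ _ : Fin K => (1:ℝ)) *ᵥ ⇑v)‖ ^ 2 ≤ ((K:ℝ)) ^ 2 := by
    rw [norm_sq_toE]
    have hentry : ∀ j : Fin K, ((Matrix.of fun _ _ : Fin K => (1:ℝ)) *ᵥ ⇑v) j = ∑ k, v k := by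
      intro j; simp [Matrix.mulVec, dotProduct]
    have hCS : (∑ k, v k) ^ 2 ≤ (K : ℝ) * ∑ k, (v k) ^ 2 := by
      simpa using sq_sum_le_card_mul_sum_sq (s := Finset.univ) (f := fun k : Fin K => v k)
    have hv2 : ∑ k, (v k) ^ 2 = 1 := by
      have : ‖toE (⇑v)‖ ^ 2 = ∑ k, (v k) ^ 2 := norm_sq_toE _
      rw [show toE (⇑v) = v from rfl, hv] at this
      simpa using this.symm
    calc ∑ j : Fin K, ((Matrix.of fun _ _ : Fin K => (1:ℝ)) *ᵥ ⇑v) j ^ 2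
        = ∑ j : Fin K, (∑ k, v k) ^ 2 := by simp_rw [hentry]
      _ = (K : ℝ) * (∑ k, v k) ^ 2 := by simp [Finset.sum_const, mul_comm]
      _ ≤ (K : ℝ) * ((K : ℝ) * ∑ k, (v k) ^ 2) := mul_le_mul_of_nonneg_left hCS hK0
      _ = (K : ℝ) ^ 2 := by rw [hv2]; ring
  exact le_of_pow_le_pow_left₀ two_ne_zero hK0 hsq

/-- **No-community-structure scenario.** If each connectivity matrix is constant,
`R⁽ᵐ⁾ = p⁽ᵐ⁾𝟙𝟙ᵀ`, and the standardization holds, then `F = 2(1−ξ₁) C + c 𝟙𝟙ᵀ` with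
`c = 2ξ₁ ∑_{(s,t)∈P} C_{z_s z_t}`, and the smallest absolute eigenvalue of `F` is at least
`2(1−ξ₁) minᵢ|λᵢ(C)| − |c| K`. -/
theorem no_community_structure_scenario
    (N n K : ℕ) (hN : 1 ≤ N) (hn : 2 ≤ n) (hK : 0 < K)
    (z : Fin n → Fin K)
    (R Ψ : Fin N → Matrix (Fin K) (Fin K) ℝ)
    (hRsym : ∀ m, (R m).IsSymm) (hΨsym : ∀ m, (Ψ m).IsSymm)
    (C : Matrix (Fin K) (Fin K) ℝ) (hC : C.IsHermitian)
    (Pim Psibar : Matrix (Fin K) (Fin K) ℝ)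
    (hPim : ∀ j k, Pim j k = (1 / (N : ℝ)) * ∑ m, (R m j k) ^ 2)
    (hPsibar : ∀ j k, Psibar j k = (1 / (N : ℝ)) * ∑ m, Ψ m j k)
    (F : Matrix (Fin K) (Fin K) ℝ)
    (hF : ∀ j k, F j k = 2 * Psibar j k * C j k
      + 2 * ∑ p ∈ Finset.univ.filter (fun p : Fin n × Fin n => p.1 < p.2),
          ((1 / (N : ℝ)) * ∑ m, R m j k * R m (z p.1) (z p.2)) * C (z p.1) (z p.2))
    -- constant connectivity matrices
    (p : Fin N → ℝ) (hconst : ∀ m j k, R m j k = p m)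
    (ξ₁ : ℝ) (hξ₁ : ξ₁ = (1 / (N : ℝ)) * ∑ m, (p m) ^ 2)
    -- standardization
    (hvar : ∀ j k : Fin K, Pim j k + Psibar j k = 1)
    (c : ℝ)
    (hc : c = 2 * ξ₁ * ∑ q ∈ Finset.univ.filter (fun q : Fin n × Fin n => q.1 < q.2),
      C (z q.1) (z q.2)) :
    F = (2 * (1 - ξ₁)) • C + c • Matrix.of (fun _ _ : Fin K => (1 : ℝ)) ∧
    ∀ (hF' : F.IsHermitian),
      Finset.univ.inf' ⟨⟨0, hK⟩, Finset.mem_univ _⟩ (fun i => |hF'.eigenvalues i|) ≥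
        2 * (1 - ξ₁) *
          Finset.univ.inf' ⟨⟨0, hK⟩, Finset.mem_univ _⟩ (fun i => |hC.eigenvalues i|)
        - |c| * (K : ℝ) := by
  have hPsi : ∀ j k : Fin K, Psibar j k = 1 - ξ₁ := by
    intro j k
    have h1 : Pim j k = ξ₁ := by
      rw [hPim, hξ₁]
      congr 1
      exact Finset.sum_congr rfl fun m _ => by rw [hconst]
    have := hvar j k
    linarith
  have hmain : F = (2 * (1 - ξ₁)) • C + c • Matrix.of (fun _ _ : Fin K => (1 : ℝ)) := by
    ext j k
    rw [Matrix.add_apply, Matrix.smul_apply, Matrix.smul_apply, Matrix.of_apply,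
      smul_eq_mul, smul_eq_mul, mul_one, hF j k, hPsi j k]
    have hsum : ∀ q ∈ Finset.univ.filter (fun q : Fin n × Fin n => q.1 < q.2),
        ((1 / (N : ℝ)) * ∑ m, R m j k * R m (z q.1) (z q.2)) * C (z q.1) (z q.2)
          = ξ₁ * C (z q.1) (z q.2) := by
      intro q _
      congr 1
      rw [hξ₁]
      congr 1
      exact Finset.sum_congr rfl fun m _ => by rw [hconst, hconst]; ring
    rw [Finset.sum_congr rfl hsum, ← Finset.mul_sum, hc]
    ring
  refine ⟨hmain, ?_⟩
  intro hF'
  have hmC0 : (0:ℝ) ≤ Finset.univ.inf' ⟨⟨0, hK⟩, Finset.mem_univ _⟩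
      (fun i => |hC.eigenvalues i|) :=
    Finset.le_inf' _ _ (fun i _ => abs_nonneg _)
  have hcK : (0:ℝ) ≤ |c| * K := by positivity
  obtain ⟨i₀, -, hi₀⟩ := Finset.exists_mem_eq_inf'
    (⟨⟨0, hK⟩, Finset.mem_univ _⟩ : (Finset.univ : Finset (Fin K)).Nonempty)
    (fun i => |hF'.eigenvalues i|)
  rw [ge_iff_le, hi₀]
  set v := hF'.eigenvectorBasis i₀ with hv_def
  have hv : ‖v‖ = 1 := hF'.eigenvectorBasis.orthonormal.1 i₀
  have hmul : F *ᵥ ⇑v = hF'.eigenvalues i₀ • ⇑v := hF'.mulVec_eigenvectorBasis i₀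
  have hnormF : ‖toE (F *ᵥ ⇑v)‖ = |hF'.eigenvalues i₀| := by
    have h1 : toE (F *ᵥ ⇑v) = hF'.eigenvalues i₀ • v := by
      rw [hmul]; rfl
    rw [h1, norm_smul, hv, Real.norm_eq_abs, mul_one]
  rcases le_or_gt 0 (1 - ξ₁) with ha | ha
  · -- a := 2*(1-ξ₁) ≥ 0
    have hdec : toE (F *ᵥ ⇑v)
        = (2 * (1 - ξ₁)) • toE (C *ᵥ ⇑v)
          + c • toE ((Matrix.of fun _ _ : Fin K => (1:ℝ)) *ᵥ ⇑v) := by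
      have : F *ᵥ ⇑v = (2 * (1 - ξ₁)) • (C *ᵥ ⇑v)
          + c • ((Matrix.of fun _ _ : Fin K => (1:ℝ)) *ᵥ ⇑v) := by
        rw [hmain, add_mulVec, smul_mulVec, smul_mulVec]
      rw [this]; rfl
    have hC_lb : Finset.univ.inf' ⟨⟨0, hK⟩, Finset.mem_univ _⟩
        (fun i => |hC.eigenvalues i|) ≤ ‖toE (C *ᵥ ⇑v)‖ :=
      min_abs_eig_le_norm_mulVec hK hC v hv
    have hJ_ub : ‖toE ((Matrix.of fun _ _ : Fin K => (1:ℝ)) *ᵥ ⇑v)‖ ≤ (K:ℝ) :=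
      norm_ones_mulVec_le v hv
    have htri : (2 * (1 - ξ₁)) * ‖toE (C *ᵥ ⇑v)‖
        - |c| * ‖toE ((Matrix.of fun _ _ : Fin K => (1:ℝ)) *ᵥ ⇑v)‖ ≤ ‖toE (F *ᵥ ⇑v)‖ := by
      set A' := (2 * (1 - ξ₁)) • toE (C *ᵥ ⇑v) with hA'def
      set B' := c • toE ((Matrix.of fun _ _ : Fin K => (1:ℝ)) *ᵥ ⇑v) with hB'def
      have h1 : ‖A'‖ ≤ ‖A' + B'‖ + ‖B'‖ := by
        calc ‖A'‖ = ‖(A' + B') + (-B')‖ := by congr 1; abel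
          _ ≤ ‖A' + B'‖ + ‖-B'‖ := norm_add_le _ _
          _ = ‖A' + B'‖ + ‖B'‖ := by rw [norm_neg]
      have hA' : ‖A'‖ = (2 * (1 - ξ₁)) * ‖toE (C *ᵥ ⇑v)‖ := by
        rw [hA'def, norm_smul, Real.norm_eq_abs, abs_of_nonneg (by linarith)]
      have hB' : ‖B'‖ = |c| * ‖toE ((Matrix.of fun _ _ : Fin K => (1:ℝ)) *ᵥ ⇑v)‖ := by
        rw [hB'def, norm_smul, Real.norm_eq_abs]
      rw [hdec]
      linarith
    have h2 : (2 * (1 - ξ₁)) * Finset.univ.inf' ⟨⟨0, hK⟩, Finset.mem_univ _⟩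
          (fun i => |hC.eigenvalues i|) ≤ (2 * (1 - ξ₁)) * ‖toE (C *ᵥ ⇑v)‖ :=
      mul_le_mul_of_nonneg_left hC_lb (by linarith)
    have h3 : |c| * ‖toE ((Matrix.of fun _ _ : Fin K => (1:ℝ)) *ᵥ ⇑v)‖ ≤ |c| * K :=
      mul_le_mul_of_nonneg_left hJ_ub (abs_nonneg c)
    linarith
  · -- a < 0 : RHS ≤ 0 ≤ |λ i₀|
    have h0 : 2 * (1 - ξ₁) * Finset.univ.inf' ⟨⟨0, hK⟩, Finset.mem_univ _⟩
        (fun i => |hC.eigenvalues i|) ≤ 0 :=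
      mul_nonpos_of_nonpos_of_nonneg (by linarith) hmC0
    have h1 : (0:ℝ) ≤ |hF'.eigenvalues i₀| := abs_nonneg _
    linarith
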